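/- Define S_oh(n) = ∑ kℓ, the sum over all quadruples (a,b,k,ℓ) of positive integers with a and b both odd, gcd(a,b) = 1, ak + bℓ = n and k < ℓ. Then S_oh(n)/n³ → 1/8 as n → ∞ along prime numbers n. -/

import Mathlib

open Filter Finset Real

namespace TwoCyl


noncomputable def rr (a b n : ℕ) : ℕ := ((n : ZMod b) * (a : ZMod b)⁻¹).val
noncomputable def ss (a b n : ℕ) : ℕ := if rr a b n = 0 then b else rr a b n
def LL (a b n : ℕ) : ℕ := (n - 1) / (a + b)
noncomputable def MM (a b n : ℕ) : ℕ :=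
  if ss a b n ≤ LL a b n then (LL a b n - ss a b n) / b + 1 else 0

section char
variable {a b : ℕ} (hco : Nat.Coprime a b) (ha : 0 < a) (hb : 0 < b)

lemma rr_lt (n : ℕ) (hb : 0 < b) : rr a b n < b := by
  haveI : NeZero b := ⟨hb.ne'⟩
  exact ZMod.val_lt _

lemma ss_pos (n : ℕ) (hb : 0 < b) : 0 < ss a b n := by
  unfold ss; split
  · exact hb
  · next h => omega

lemma ss_le (n : ℕ) (hb : 0 < b) : ss a b n ≤ b := by
  unfold ss; split
  · exact le_rfl
  · exact (rr_lt n hb).le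

include hco hb in
lemma dvd_iff_mod {n k : ℕ} (hk : a * k ≤ n) : b ∣ n - a * k ↔ k % b = rr a b n := by
  haveI : NeZero b := ⟨hb.ne'⟩
  rw [← Nat.modEq_iff_dvd' hk]
  have hu : (a : ZMod b) * (a : ZMod b)⁻¹ = 1 := ZMod.coe_mul_inv_eq_one a hco
  constructor
  · intro h
    have h2 : ((a * k : ℕ) : ZMod b) = (n : ZMod b) := (ZMod.natCast_eq_natCast_iff _ _ _).2 h
    push_cast at h2
    have h3 : (k : ZMod b) = (n : ZMod b) * (a : ZMod b)⁻¹ := by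
      calc (k : ZMod b) = ((a : ZMod b) * (a : ZMod b)⁻¹) * k := by rw [hu]; ring
        _ = ((a : ZMod b) * k) * (a : ZMod b)⁻¹ := by ring
        _ = (n : ZMod b) * (a : ZMod b)⁻¹ := by rw [h2]
    have := congrArg ZMod.val h3
    rwa [ZMod.val_natCast] at this
  · intro h
    have h3 : (k : ZMod b) = (n : ZMod b) * (a : ZMod b)⁻¹ := by
      have e1 : ((k % b : ℕ) : ZMod b) = (k : ZMod b) := ZMod.natCast_mod k b
      rw [← e1, h]
      unfold rr
      rw [ZMod.natCast_val, ZMod.cast_id]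
    apply (ZMod.natCast_eq_natCast_iff _ _ _).1
    push_cast
    calc ((a : ZMod b) * k) = (a : ZMod b) * ((n : ZMod b) * (a:ZMod b)⁻¹) := by rw [h3]
      _ = ((a : ZMod b) * (a:ZMod b)⁻¹) * n := by ring
      _ = (n : ZMod b) := by rw [hu]; ring

lemma mod_iff_param {n k : ℕ} (hb : 0 < b) :
    (0 < k ∧ k % b = rr a b n) ↔ ∃ t, k = ss a b n + t * b := by
  constructor
  · rintro ⟨hk, hmod⟩
    by_cases hr : rr a b n = 0
    · have hdvd : b ∣ k := by
        rw [Nat.dvd_iff_mod_eq_zero]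
        omega
      obtain ⟨c, rfl⟩ := hdvd
      have hc : 0 < c := by
        rcases Nat.eq_zero_or_pos c with h | h
        · subst h; simp at hk
        · exact h
      refine ⟨c - 1, ?_⟩
      unfold ss
      rw [if_pos hr]
      cases c with
      | zero => omega
      | succ c =>
        simp only [Nat.succ_sub_one, Nat.mul_succ]
        ring
    · refine ⟨k / b, ?_⟩
      unfold ss
      rw [if_neg hr, ← hmod]
      exact (Nat.mod_add_div' k b).symm
  · rintro ⟨t, rfl⟩
    have h1 : 0 < ss a b n := ss_pos n hb
    refine ⟨by omega, ?_⟩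
    rw [Nat.add_mul_mod_self_right]
    unfold ss
    split
    · next h => rw [Nat.mod_self]; omega
    · exact Nat.mod_eq_of_lt (rr_lt n hb)

end char

section char2
variable {a b : ℕ}

lemma lt_iff_le_LL {n k : ℕ} (ha : 0 < a) (hn : 1 ≤ n) :
    (a + b) * k < n ↔ k ≤ LL a b n := by
  unfold LL
  rw [Nat.le_div_iff_mul_le (by omega : 0 < a + b)]
  have e : (a + b) * k = k * (a + b) := by ring
  omega

lemma param_le_iff {n t : ℕ} (hb : 0 < b) :
    (ss a b n + t * b ≤ LL a b n) ↔ t < MM a b n := by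
  unfold MM
  split
  · next hsl =>
    rw [Nat.lt_succ_iff, Nat.le_div_iff_mul_le hb]
    omega
  · next hsl =>
    constructor
    · intro h; exact absurd (le_trans (Nat.le_add_right _ _) h) hsl
    · intro h; omega

lemma mem_iff (hco : Nat.Coprime a b) (ha : 0 < a) (hb : 0 < b) {n k : ℕ} (hn : 1 ≤ n) :
    (0 < k ∧ b ∣ n - a * k ∧ (a + b) * k < n) ↔
      ∃ t, t < MM a b n ∧ k = ss a b n + t * b := by
  constructor
  · rintro ⟨hk, hdvd, hlt⟩
    have hak : a * k ≤ n := by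
      have e : (a + b) * k = a * k + b * k := by ring
      omega
    have hmod : k % b = rr a b n := (dvd_iff_mod hco hb hak).1 hdvd
    obtain ⟨t, rfl⟩ := (mod_iff_param hb).1 ⟨hk, hmod⟩
    refine ⟨t, ?_, rfl⟩
    rw [← param_le_iff hb, ← lt_iff_le_LL ha hn]
    exact hlt
  · rintro ⟨t, htM, rfl⟩
    set k := ss a b n + t * b with hk
    have hkpos : 0 < k := by have := ss_pos (a := a) n hb; omega
    have hlt : (a + b) * k < n := by
      rw [lt_iff_le_LL ha hn]
      exact (param_le_iff hb).2 htM
    have hak : a * k ≤ n := by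
      have e : (a + b) * k = a * k + b * k := by ring
      omega
    have hmod : k % b = rr a b n := ((mod_iff_param hb).2 ⟨t, rfl⟩).2
    exact ⟨hkpos, (dvd_iff_mod hco hb hak).2 hmod, hlt⟩

end char2

def AA (a b n : ℕ) : ℕ :=
  ∑ k ∈ Finset.Ioc 0 n, ∑ l ∈ Finset.Ioc 0 n, if a * k + b * l = n ∧ k < l then k * l else 0

section collapse
variable {a b : ℕ}

lemma collapse (ha : 0 < a) (hb : 0 < b) {n : ℕ} (hn : 1 ≤ n) :
    AA a b n = ∑ k ∈ Finset.Ioc 0 n,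
      if b ∣ n - a * k ∧ (a + b) * k < n then k * ((n - a * k) / b) else 0 := by
  unfold AA
  refine Finset.sum_congr rfl fun k hk => ?_
  simp only [Finset.mem_Ioc] at hk
  by_cases hc : b ∣ n - a * k ∧ (a + b) * k < n
  · obtain ⟨hdvd, hlt⟩ := hc
    set l₀ := (n - a * k) / b with hl₀
    have he : (a + b) * k = a * k + b * k := by ring
    have hak : a * k < n := by omega
    have hbl₀ : b * l₀ = n - a * k := Nat.mul_div_cancel' hdvd
    have heq : a * k + b * l₀ = n := by omega
    have hkl : k < l₀ := by
      have hbk : b * k < b * l₀ := by omega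
      exact Nat.lt_of_mul_lt_mul_left hbk
    have hl₀mem : l₀ ∈ Finset.Ioc 0 n := by
      simp only [Finset.mem_Ioc]
      have : l₀ ≤ b * l₀ := Nat.le_mul_of_pos_left _ hb
      omega
    rw [if_pos ⟨hdvd, hlt⟩, Finset.sum_eq_single_of_mem l₀ hl₀mem]
    · rw [if_pos ⟨heq, hkl⟩]
    · intro l hl hne
      rw [if_neg]
      rintro ⟨h4, -⟩
      have : b * l = b * l₀ := by omega
      exact hne (Nat.eq_of_mul_eq_mul_left hb this)
  · rw [if_neg hc, Finset.sum_eq_zero]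
    intro l hl
    simp only [Finset.mem_Ioc] at hl
    rw [if_neg]
    rintro ⟨h4, h5⟩
    apply hc
    have he : (a + b) * k = a * k + b * k := by ring
    have hbk : b * k < b * l := mul_lt_mul_of_pos_left h5 hb
    constructor
    · exact ⟨l, by omega⟩
    · omega

lemma reindex (hco : Nat.Coprime a b) (ha : 0 < a) (hb : 0 < b) {n : ℕ} (hn : 1 ≤ n) :
    AA a b n = ∑ t ∈ Finset.range (MM a b n),
      (ss a b n + t * b) * ((n - a * (ss a b n + t * b)) / b) := by
  rw [collapse ha hb hn, ← Finset.sum_filter]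
  refine Finset.sum_nbij' (fun k => (k - ss a b n) / b) (fun t => ss a b n + t * b)
    ?_ ?_ ?_ ?_ ?_
  · intro k hk
    simp only [Finset.mem_filter, Finset.mem_Ioc] at hk
    obtain ⟨⟨hk0, hkn⟩, hdvd, hlt⟩ := hk
    obtain ⟨t, htM, rfl⟩ := (mem_iff hco ha hb hn).1 ⟨hk0, hdvd, hlt⟩
    simp only [Finset.mem_range]
    rw [Nat.add_sub_cancel_left, Nat.mul_div_cancel _ hb]
    exact htM
  · intro t ht
    simp only [Finset.mem_range] at ht
    have hmem := (mem_iff hco ha hb hn).2 ⟨t, ht, rfl⟩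
    obtain ⟨hk0, hdvd, hlt⟩ := hmem
    simp only [Finset.mem_filter, Finset.mem_Ioc]
    have hkn : ss a b n + t * b ≤ n := by
      have : ss a b n + t * b ≤ (a + b) * (ss a b n + t * b) :=
        Nat.le_mul_of_pos_left _ (by omega)
      omega
    exact ⟨⟨hk0, hkn⟩, hdvd, hlt⟩
  · intro k hk
    simp only [Finset.mem_filter, Finset.mem_Ioc] at hk
    obtain ⟨⟨hk0, hkn⟩, hdvd, hlt⟩ := hk
    obtain ⟨t, htM, rfl⟩ := (mem_iff hco ha hb hn).1 ⟨hk0, hdvd, hlt⟩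
    rw [Nat.add_sub_cancel_left, Nat.mul_div_cancel _ hb]
  · intro t ht
    rw [Nat.add_sub_cancel_left, Nat.mul_div_cancel _ hb]
  · intro k hk
    simp only [Finset.mem_filter, Finset.mem_Ioc] at hk
    obtain ⟨⟨hk0, hkn⟩, hdvd, hlt⟩ := hk
    obtain ⟨t, htM, rfl⟩ := (mem_iff hco ha hb hn).1 ⟨hk0, hdvd, hlt⟩
    rw [Nat.add_sub_cancel_left, Nat.mul_div_cancel _ hb]

end collapse

lemma sr1 (M : ℕ) : ∑ t ∈ Finset.range M, (t:ℝ) = M * (M - 1) / 2 := by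
  induction M with
  | zero => simp
  | succ m ih => rw [Finset.sum_range_succ, ih]; push_cast; ring

lemma sr2 (M : ℕ) : ∑ t ∈ Finset.range M, (t:ℝ)^2 = M * (M - 1) * (2*M - 1) / 6 := by
  induction M with
  | zero => simp
  | succ m ih => rw [Finset.sum_range_succ, ih]; push_cast; ring

section closed
variable {a b : ℕ}

lemma AA_real (hco : Nat.Coprime a b) (ha : 0 < a) (hb : 0 < b) {n : ℕ} (hn : 1 ≤ n) :
    (AA a b n : ℝ) =
      (MM a b n : ℝ) * ((ss a b n : ℝ) * ((n:ℝ) - a * ss a b n) / b)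
      + ((n:ℝ) - 2 * a * ss a b n) * ((MM a b n : ℝ) * ((MM a b n : ℝ) - 1) / 2)
      - (a:ℝ) * b * ((MM a b n : ℝ) * ((MM a b n : ℝ) - 1) * (2 * (MM a b n : ℝ) - 1) / 6) := by
  have hbR : ((b:ℝ)) ≠ 0 := Nat.cast_ne_zero.2 hb.ne'
  have step : ∀ t ∈ Finset.range (MM a b n),
      (((ss a b n + t * b) * ((n - a * (ss a b n + t * b)) / b) : ℕ) : ℝ)
      = (ss a b n : ℝ) * ((n:ℝ) - a * ss a b n) / b
        + ((n:ℝ) - 2 * a * ss a b n) * t - (a:ℝ) * b * (t:ℝ)^2 := by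
    intro t ht
    simp only [Finset.mem_range] at ht
    obtain ⟨hk0, hdvd, hlt⟩ := (mem_iff hco ha hb hn).2 ⟨t, ht, rfl⟩
    have hak : a * (ss a b n + t * b) ≤ n := by
      have e : (a + b) * (ss a b n + t * b) = a * (ss a b n + t * b) + b * (ss a b n + t * b) := by
        ring
      omega
    rw [Nat.cast_mul, Nat.cast_div hdvd hbR, Nat.cast_sub hak]
    push_cast
    field_simp
    ring
  rw [reindex hco ha hb hn, Nat.cast_sum, Finset.sum_congr rfl step]
  rw [Finset.sum_sub_distrib, Finset.sum_add_distrib, Finset.sum_const, Finset.card_range,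
    nsmul_eq_mul, ← Finset.mul_sum, ← Finset.mul_sum, sr1, sr2]

end closed

section limits
variable {a b : ℕ}

lemma MM_bounds (ha : 0 < a) (hb : 0 < b) {n : ℕ} (hn : (a+b)*(b+1)+1 ≤ n) :
    b*(a+b) * MM a b n ≤ n + b*(a+b) ∧ n ≤ b*(a+b) * MM a b n + (a+b)*(b+1) := by
  have hS1 : 1 ≤ ss a b n := ss_pos n hb
  have hSb : ss a b n ≤ b := ss_le n hb
  have hbL : b ≤ LL a b n := by
    unfold LL
    rw [Nat.le_div_iff_mul_le (by omega : 0 < a + b)]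
    have e : (a+b)*(b+1) = b*(a+b) + (a+b) := by ring
    omega
  have hSL : ss a b n ≤ LL a b n := le_trans hSb hbL
  have hMM : MM a b n = (LL a b n - ss a b n) / b + 1 := by unfold MM; rw [if_pos hSL]
  set L := LL a b n with hL
  set S := ss a b n with hSdef
  set Q := (L - S) / b with hQ
  have hdm : b * Q + (L - S) % b = L - S := Nat.div_add_mod (L - S) b
  have hml : (L - S) % b < b := Nat.mod_lt _ hb
  have hdm2 : (a+b) * L + (n-1) % (a+b) = n - 1 := by
    have := Nat.div_add_mod (n-1) (a+b)
    rw [hL]; unfold LL; omega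
  have hml2 : (n-1) % (a+b) < a + b := Nat.mod_lt _ (by omega)
  constructor
  · have eM : b*(a+b) * MM a b n = (a+b)*(b*Q) + b*(a+b) := by rw [hMM]; ring
    have h1 : (a+b)*(b*Q) ≤ (a+b)*L := Nat.mul_le_mul_left _ (by omega)
    omega
  · have h2 : L + 1 ≤ b*Q + 2*b := by omega
    have h3 : (a+b)*(L+1) ≤ (a+b)*(b*Q + 2*b) := Nat.mul_le_mul_left _ h2
    have e1 : (a+b)*(b*Q + 2*b) = b*(a+b) * MM a b n + (a+b)*b := by rw [hMM]; ring
    have e2 : (a+b)*(b+1) = (a+b)*b + (a+b) := by ring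
    have e3 : (a+b)*(L+1) = (a+b)*L + (a+b) := by ring
    omega

lemma tendsto_y (hb : 0 < b) :
    Tendsto (fun n : ℕ => (ss a b n : ℝ) / n) atTop (nhds 0) := by
  refine squeeze_zero (fun n => by positivity) (fun n => ?_)
    (tendsto_const_div_atTop_nhds_zero_nat (b:ℝ))
  rcases Nat.eq_zero_or_pos n with h | h
  · subst h; simp
  · gcongr
    exact_mod_cast ss_le n hb

lemma tendsto_x (ha : 0 < a) (hb : 0 < b) :
    Tendsto (fun n : ℕ => (MM a b n : ℝ) / n) atTop
      (nhds (1 / ((b:ℝ) * ((a:ℝ) + b)))) := by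
  set C : ℝ := (b:ℝ) * ((a:ℝ) + b) with hC
  have hCpos : (0:ℝ) < C := by positivity
  have hC1 : (1:ℝ) ≤ C := by
    have h1 : (1:ℝ) ≤ (b:ℝ) := by exact_mod_cast hb
    have h2 : (1:ℝ) ≤ (a:ℝ) + b := by
      have : (1:ℝ) ≤ (a:ℝ) := by exact_mod_cast ha
      have := Nat.cast_nonneg (α := ℝ) b
      linarith
    nlinarith
  set D : ℝ := ((a:ℝ)+b) * ((b:ℝ)+1) with hD
  have hD0 : (0:ℝ) ≤ D := by positivity
  have hg : Tendsto (fun n : ℕ => 1/C - D * (1/(n:ℝ))) atTop (nhds (1/C)) := by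
    have h0 := (tendsto_one_div_atTop_nhds_zero_nat).const_mul D
    have := tendsto_const_nhds (x := 1/C) (f := atTop (α := ℕ)) |>.sub h0
    simpa using this
  have hh : Tendsto (fun n : ℕ => 1/C + 1/(n:ℝ)) atTop (nhds (1/C)) := by
    have := tendsto_const_nhds (x := 1/C) (f := atTop (α := ℕ)) |>.add
      tendsto_one_div_atTop_nhds_zero_nat
    simpa using this
  refine tendsto_of_tendsto_of_tendsto_of_le_of_le' hg hh ?_ ?_
  · filter_upwards [eventually_ge_atTop ((a+b)*(b+1)+1)] with n hn
    have hn1 : (1:ℕ) ≤ n := by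
      have : 1 ≤ (a+b)*(b+1)+1 := by omega
      omega
    have hn0 : (0:ℝ) < (n:ℝ) := by exact_mod_cast hn1
    obtain ⟨hup, hlow⟩ := MM_bounds ha hb hn
    have hlowR : (n:ℝ) ≤ C * (MM a b n : ℝ) + D := by
      have : ((n:ℕ):ℝ) ≤ ((b*(a+b) * MM a b n + (a+b)*(b+1) : ℕ) : ℝ) := by exact_mod_cast hlow
      push_cast at this
      rw [hC, hD]
      linarith
    rw [show (1:ℝ)/C - D * (1/(n:ℝ)) = ((n:ℝ)/C - D)/(n:ℝ) by field_simp]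
    have hnum : (n:ℝ)/C - D ≤ (MM a b n : ℝ) := by
      nlinarith [hlowR, hC1, hD0, hCpos, div_mul_cancel₀ (n:ℝ) hCpos.ne']
    gcongr
  · filter_upwards [eventually_ge_atTop ((a+b)*(b+1)+1)] with n hn
    have hn1 : (1:ℕ) ≤ n := by omega
    have hn0 : (0:ℝ) < (n:ℝ) := by exact_mod_cast hn1
    obtain ⟨hup, hlow⟩ := MM_bounds ha hb hn
    have hupR : C * (MM a b n : ℝ) ≤ (n:ℝ) + C := by
      have : ((b*(a+b) * MM a b n : ℕ):ℝ) ≤ ((n + b*(a+b) : ℕ):ℝ) := by exact_mod_cast hup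
      push_cast at this
      rw [hC]
      linarith
    rw [div_le_iff₀ hn0]
    have e2 : ((n:ℝ)/C)*C = n := div_mul_cancel₀ _ hCpos.ne'
    have goal2 : (MM a b n : ℝ) ≤ (n:ℝ)/C + 1 := by nlinarith
    calc (MM a b n : ℝ) ≤ (n:ℝ)/C + 1 := goal2
      _ = (1/C + 1/(n:ℝ)) * n := by field_simp
      
end limits

section main
variable {a b : ℕ}

set_option maxHeartbeats 2000000 in
lemma tendsto_AA (hco : Nat.Coprime a b) (ha : 0 < a) (hb : 0 < b) :
    Tendsto (fun n : ℕ => (AA a b n : ℝ) / (n:ℝ)^3) atTop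
      (nhds (((a:ℝ) + 3*b) / (6 * (b:ℝ)^2 * ((a:ℝ) + b)^3))) := by
  set A : ℝ := (a:ℝ) with hA
  set B : ℝ := (b:ℝ) with hB
  have hApos : (0:ℝ) < A := by rw [hA]; exact_mod_cast ha
  have hBpos : (0:ℝ) < B := by rw [hB]; exact_mod_cast hb
  set μ : ℝ := 1 / (B * (A + B)) with hμ
  set x : ℕ → ℝ := fun n => (MM a b n : ℝ) / n with hx_def
  set y : ℕ → ℝ := fun n => (ss a b n : ℝ) / n with hy_def
  have hx : Tendsto x atTop (nhds μ) := tendsto_x ha hb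
  have hy : Tendsto y atTop (nhds 0) := tendsto_y hb
  have hz : Tendsto (fun n : ℕ => 1/(n:ℝ)) atTop (nhds 0) := tendsto_one_div_atTop_nhds_zero_nat
  set E : ℕ → ℝ := fun n =>
    x n * (y n * (1 - A * y n)) / B
    + (1 - 2 * A * y n) * (x n * (x n - 1/(n:ℝ))) / 2
    - A * B * (x n * (x n - 1/(n:ℝ)) * (2 * x n - 1/(n:ℝ))) / 6 with hE_def
  have hT : Tendsto E atTop (nhds (
      μ * (0 * (1 - A * 0)) / B
      + (1 - 2 * A * 0) * (μ * (μ - 0)) / 2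
      - A * B * (μ * (μ - 0) * (2 * μ - 0)) / 6)) := by
    apply Tendsto.sub
    · apply Tendsto.add
      · exact ((hx.mul (hy.mul (tendsto_const_nhds.sub (hy.const_mul A)))).div_const B)
      · exact (((tendsto_const_nhds.sub (hy.const_mul (2*A))).mul
          (hx.mul (hx.sub hz))).div_const 2)
    · exact ((((hx.mul (hx.sub hz)).mul ((hx.const_mul 2).sub hz)).const_mul (A*B)).div_const 6)
  have hval : μ * (0 * (1 - A * 0)) / B
      + (1 - 2 * A * 0) * (μ * (μ - 0)) / 2
      - A * B * (μ * (μ - 0) * (2 * μ - 0)) / 6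
      = (A + 3*B) / (6 * B^2 * (A + B)^3) := by
    rw [hμ]
    have h1 : B * (A + B) ≠ 0 := by positivity
    have h2 : A + B ≠ 0 := by positivity
    field_simp
    ring
  rw [hval] at hT
  refine hT.congr' ?_
  filter_upwards [eventually_ge_atTop 1] with n hn
  have hn0 : ((n:ℝ)) ≠ 0 := by
    have : (0:ℝ) < n := by exact_mod_cast hn
    exact this.ne'
  rw [hE_def]
  show _ = (AA a b n : ℝ) / (n:ℝ)^3
  rw [AA_real hco ha hb hn]
  simp only [hx_def, hy_def]
  field_simp
  ring

end main

noncomputable def Fn (n : ℕ) (p : ℕ × ℕ) : ℝ :=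
  ((∑ k ∈ Finset.Ioc 0 n, ∑ l ∈ Finset.Ioc 0 n,
    if Odd p.1 ∧ Odd p.2 ∧ Nat.Coprime p.1 p.2 ∧ p.1 * k + p.2 * l = n ∧ k < l
    then k * l else 0 : ℕ) : ℝ) / (n : ℝ) ^ 3

noncomputable def g (p : ℕ × ℕ) : ℝ :=
  if Odd p.1 ∧ Odd p.2 ∧ Nat.Coprime p.1 p.2 then
    ((p.1 : ℝ) + 3 * p.2) / (6 * (p.2:ℝ) ^ 2 * ((p.1:ℝ) + p.2) ^ 3) else 0

lemma L2 (p : ℕ × ℕ) : Tendsto (fun n => Fn n p) atTop (nhds (g p)) := by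
  obtain ⟨a, b⟩ := p
  by_cases hC : Odd a ∧ Odd b ∧ Nat.Coprime a b
  · have hFn : ∀ n : ℕ, Fn n (a, b) = (AA a b n : ℝ) / (n:ℝ)^3 := by
      intro n
      unfold Fn AA
      congr 2
      refine Finset.sum_congr rfl fun k _ => Finset.sum_congr rfl fun l _ => ?_
      refine if_congr ?_ rfl rfl
      constructor
      · rintro ⟨-, -, -, h4, h5⟩; exact ⟨h4, h5⟩
      · rintro ⟨h4, h5⟩; exact ⟨hC.1, hC.2.1, hC.2.2, h4, h5⟩
    have hg : g (a, b) = ((a:ℝ) + 3*b) / (6 * (b:ℝ)^2 * ((a:ℝ) + b)^3) := by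
      unfold g; rw [if_pos hC]
    rw [hg]
    refine (tendsto_AA hC.2.2 hC.1.pos hC.2.1.pos).congr fun n => (hFn n).symm
  · have hFn : ∀ n : ℕ, Fn n (a, b) = 0 := by
      intro n
      unfold Fn
      rw [Finset.sum_eq_zero fun k _ => Finset.sum_eq_zero fun l _ => ?_]
      · simp
      · rw [if_neg]
        rintro ⟨h1, h2, h3, -⟩
        exact hC ⟨h1, h2, h3⟩
    have hg : g (a, b) = 0 := by unfold g; rw [if_neg hC]
    rw [hg]
    exact tendsto_const_nhds.congr fun n => (hFn n).symm



noncomputable def vo (j : ℕ) (m : ℕ) : ℝ := if Odd m then 1 / (m:ℝ) ^ j else 0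

noncomputable def uc (p : ℕ × ℕ) : ℝ :=
  if Odd p.1 ∧ Odd p.2 ∧ Nat.Coprime p.1 p.2 then 1 / ((p.1:ℝ) ^ 2 * (p.2:ℝ) ^ 2) else 0

lemma odd_of_dvd {m x : ℕ} (h : m ∣ x) (hx : Odd x) : Odd m := by
  rcases Nat.even_or_odd m with he | ho
  · exfalso
    have h2 : (2:ℕ) ∣ x := dvd_trans he.two_dvd h
    rw [Nat.odd_iff] at hx
    omega
  · exact ho

lemma oddsum {j : ℕ} (hj : 1 ≤ j) {S : ℝ} (h : HasSum (fun n : ℕ => 1 / (n:ℝ) ^ j) S) :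
    HasSum (vo j) (S - S / 2 ^ j) := by
  have he2 : HasSum (fun m : ℕ => 1 / ((2 * m : ℕ):ℝ) ^ j) (S / 2 ^ j) := by
    have := h.div_const (2 ^ j)
    refine this.congr_fun fun m => ?_
    push_cast
    rw [mul_pow, div_div, mul_comm ((2:ℝ)^j)]
  have hinj : Function.Injective (fun m : ℕ => 2 * m) := by
    intro x y h; dsimp only at h; omega
  have he : HasSum (fun n : ℕ => if Even n then 1 / (n:ℝ) ^ j else 0) (S / 2 ^ j) := by
    rw [← Function.Injective.hasSum_iff hinj ?_]
    · refine he2.congr_fun fun m => ?_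
      simp [even_two_mul]
    · intro x hx
      rw [if_neg]
      intro hx2
      refine hx ⟨x / 2, ?_⟩
      obtain ⟨c, hc⟩ := hx2
      dsimp only
      omega
  have := h.sub he
  refine this.congr_fun fun n => ?_
  unfold vo
  rcases Nat.even_or_odd n with hn | hn
  · rw [if_pos hn, if_neg (Nat.not_odd_iff_even.2 hn)]; ring
  · rw [if_neg (Nat.not_even_iff_odd.2 hn), if_pos hn]; ring

lemma hasSum_vo2 : HasSum (vo 2) (π ^ 2 / 8) := by
  have := oddsum (j := 2) (by norm_num) hasSum_zeta_two
  convert this using 1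
  ring

lemma hasSum_vo4 : HasSum (vo 4) (π ^ 4 / 96) := by
  have := oddsum (j := 4) (by norm_num) hasSum_zeta_four
  convert this using 1
  ring

lemma vo_nonneg (j m : ℕ) : 0 ≤ vo j m := by unfold vo; split <;> positivity

lemma uc_nonneg (p : ℕ × ℕ) : 0 ≤ uc p := by unfold uc; split <;> positivity

lemma uc_le (p : ℕ × ℕ) : uc p ≤ vo 2 p.1 * vo 2 p.2 := by
  unfold uc vo
  split
  · next h =>
    rw [if_pos h.1, if_pos h.2.1, div_mul_div_comm, one_mul]
  · next h =>
    split <;> split <;> positivity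

lemma uc_summable : Summable uc :=
  Summable.of_nonneg_of_le uc_nonneg uc_le
    (hasSum_vo2.summable.mul_of_nonneg hasSum_vo2.summable (vo_nonneg 2) (vo_nonneg 2))

lemma hasSum_u : HasSum (fun p : ℕ × ℕ => vo 2 p.1 * vo 2 p.2) (π ^ 4 / 64) := by
  have := hasSum_vo2.mul hasSum_vo2
    (hasSum_vo2.summable.mul_of_nonneg hasSum_vo2.summable (vo_nonneg 2) (vo_nonneg 2))
  rw [show π ^ 4 / 64 = π ^ 2 / 8 * (π ^ 2 / 8) by ring]
  exact this

lemma vo_ne {j m : ℕ} (h : vo j m ≠ 0) : Odd m := by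
  by_contra hc
  exact h (by unfold vo; rw [if_neg hc])

lemma uc_ne {p : ℕ × ℕ} (h : uc p ≠ 0) : Odd p.1 ∧ Odd p.2 ∧ Nat.Coprime p.1 p.2 := by
  by_contra hc
  exact h (by unfold uc; rw [if_neg hc])

lemma tsum_uc : ∑' p : ℕ × ℕ, uc p = 3 / 2 := by
  set T := ∑' p : ℕ × ℕ, uc p with hT
  have hucT : HasSum uc T := uc_summable.hasSum
  have hw : HasSum (fun q : ℕ × (ℕ × ℕ) => vo 4 q.1 * uc q.2) (π ^ 4 / 96 * T) :=
    hasSum_vo4.mul hucT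
      (hasSum_vo4.summable.mul_of_nonneg uc_summable (vo_nonneg 4) uc_nonneg)
  have key : ∑' p : ℕ × ℕ, vo 2 p.1 * vo 2 p.2 = ∑' q : ℕ × (ℕ × ℕ), vo 4 q.1 * uc q.2 := by
    apply tsum_eq_tsum_of_ne_zero_bij
      (i := fun q => ((q : ℕ × (ℕ × ℕ)).1 * (q : ℕ × (ℕ × ℕ)).2.1,
        (q : ℕ × (ℕ × ℕ)).1 * (q : ℕ × (ℕ × ℕ)).2.2))
    · -- injectivity on support
      rintro ⟨⟨d, a, b⟩, hq⟩ ⟨⟨d', a', b'⟩, hq'⟩ hEq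
      simp only [Function.mem_support, ne_eq, mul_eq_zero, not_or] at hq hq'
      obtain ⟨ha, hb, hco⟩ := uc_ne hq.2
      obtain ⟨ha', hb', hco'⟩ := uc_ne hq'.2
      have hd := vo_ne hq.1
      have hd' := vo_ne hq'.1
      simp only [Prod.mk.injEq] at hEq ⊢
      obtain ⟨e1, e2⟩ := hEq
      have hgcd : d * Nat.gcd a b = d' * Nat.gcd a' b' := by
        rw [← Nat.gcd_mul_left, ← Nat.gcd_mul_left, e1, e2]
      rw [Nat.Coprime] at hco hco'
      rw [hco, hco'] at hgcd
      simp only [mul_one] at hgcd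
      subst hgcd
      have ha2 : a = a' := Nat.eq_of_mul_eq_mul_left hd.pos e1
      have hb2 : b = b' := Nat.eq_of_mul_eq_mul_left hd.pos e2
      simp [ha2, hb2]
    · -- support f ⊆ range i
      rintro ⟨x, y⟩ hxy
      simp only [Function.mem_support, ne_eq, mul_eq_zero, not_or] at hxy
      have hx := vo_ne hxy.1
      have hy := vo_ne hxy.2
      set d := Nat.gcd x y with hd
      have hdpos : 0 < d := Nat.gcd_pos_of_pos_left y hx.pos
      have hdx : d ∣ x := Nat.gcd_dvd_left x y
      have hdy : d ∣ y := Nat.gcd_dvd_right x y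
      have hwne : vo 4 d * uc (x / d, y / d) ≠ 0 := by
        apply mul_ne_zero
        · unfold vo
          rw [if_pos (odd_of_dvd hdx hx)]
          have : ((d:ℝ)) ≠ 0 := Nat.cast_ne_zero.2 (by omega)
          positivity
        · unfold uc
          rw [if_pos]
          · have h1 : (0:ℕ) < x / d := Nat.div_pos (Nat.le_of_dvd hx.pos hdx) hdpos
            have h2 : (0:ℕ) < y / d := Nat.div_pos (Nat.le_of_dvd hy.pos hdy) hdpos
            have c1 : ((x/d : ℕ):ℝ) ≠ 0 := Nat.cast_ne_zero.2 (by omega)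
            have c2 : ((y/d : ℕ):ℝ) ≠ 0 := Nat.cast_ne_zero.2 (by omega)
            positivity
          · exact ⟨odd_of_dvd (Nat.div_dvd_of_dvd hdx) hx,
              odd_of_dvd (Nat.div_dvd_of_dvd hdy) hy,
              Nat.coprime_div_gcd_div_gcd hdpos⟩
      refine ⟨⟨(d, (x / d, y / d)), hwne⟩, ?_⟩
      simp only [Prod.mk.injEq]
      exact ⟨Nat.mul_div_cancel' hdx, Nat.mul_div_cancel' hdy⟩
    · -- values agree
      rintro ⟨⟨d, a, b⟩, hq⟩
      simp only [Function.mem_support, ne_eq, mul_eq_zero, not_or] at hq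
      obtain ⟨ha, hb, hco⟩ := uc_ne hq.2
      have hd := vo_ne hq.1
      show vo 2 (d * a) * vo 2 (d * b) = vo 4 d * uc (a, b)
      unfold vo uc
      rw [if_pos (hd.mul ha), if_pos (hd.mul hb), if_pos hd, if_pos ⟨ha, hb, hco⟩]
      have c1 : ((d:ℝ)) ≠ 0 := Nat.cast_ne_zero.2 hd.pos.ne'
      have c2 : ((a:ℝ)) ≠ 0 := Nat.cast_ne_zero.2 ha.pos.ne'
      have c3 : ((b:ℝ)) ≠ 0 := Nat.cast_ne_zero.2 hb.pos.ne'

      push_cast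
      field_simp
  rw [hasSum_u.tsum_eq, hw.tsum_eq] at key
  have hp : (π:ℝ) ^ 4 ≠ 0 := pow_ne_zero _ Real.pi_ne_zero
  field_simp at key
  have h2 : (π:ℝ)^4 * 96 = π^4 * (T*64) := by rw [key]; ring
  have h3 : (96:ℝ) = T * 64 := mul_left_cancel₀ hp h2
  linarith

lemma g_nonneg (p : ℕ × ℕ) : 0 ≤ g p := by
  unfold g; split <;> positivity

lemma g_le_uc (p : ℕ × ℕ) : g p ≤ uc p := by
  unfold g uc
  split
  · next h =>
    have a1 : (1:ℝ) ≤ p.1 := by exact_mod_cast h.1.pos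
    have b1 : (1:ℝ) ≤ p.2 := by exact_mod_cast h.2.1.pos
    set x : ℝ := (p.1 : ℝ)
    set y : ℝ := (p.2 : ℝ)
    rw [div_le_div_iff₀ (by positivity) (by positivity)]
    have t1 : (0:ℝ) ≤ y^2*x^3 := by positivity
    have t2 : (0:ℝ) ≤ x^2*y^3 := by positivity
    have t3 : (0:ℝ) ≤ x*y^4 := by positivity
    have t4 : (0:ℝ) ≤ y^5 := by positivity
    nlinarith [t1, t2, t3, t4]
  · exact le_rfl

lemma g_add_swap (p : ℕ × ℕ) : g p + g p.swap = 1/6 * uc p := by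
  obtain ⟨a, b⟩ := p
  unfold g uc
  simp only [Prod.swap_prod_mk]
  by_cases h : Odd a ∧ Odd b ∧ Nat.Coprime a b
  · rw [if_pos h, if_pos (⟨h.2.1, h.1, h.2.2.symm⟩ : Odd b ∧ Odd a ∧ Nat.Coprime b a),
      if_pos h]
    have c1 : ((a:ℝ)) ≠ 0 := Nat.cast_ne_zero.2 h.1.pos.ne'
    have c2 : ((b:ℝ)) ≠ 0 := Nat.cast_ne_zero.2 h.2.1.pos.ne'
    have c3 : ((a:ℝ)) + b ≠ 0 := by positivity
    have c4 : ((b:ℝ)) + a ≠ 0 := by positivity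
    field_simp
    ring
  · rw [if_neg h, if_neg (fun hc => h ⟨hc.2.1, hc.1, hc.2.2.symm⟩), if_neg h]
    norm_num

lemma L5 : ∑' p : ℕ × ℕ, g p = 1 / 8 := by
  have hgs : Summable g := Summable.of_nonneg_of_le g_nonneg g_le_uc uc_summable
  have hswap : Summable (fun p : ℕ × ℕ => g p.swap) := by
    have := (Equiv.prodComm ℕ ℕ).summable_iff.2 hgs
    exact this.congr fun p => rfl
  have h1 : ∑' p : ℕ × ℕ, g p.swap = ∑' p : ℕ × ℕ, g p := by
    have := (Equiv.prodComm ℕ ℕ).tsum_eq g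
    rw [← this]
    exact tsum_congr fun p => rfl
  have h3 : ∑' p : ℕ × ℕ, (g p + g p.swap) = ∑' p : ℕ × ℕ, 1/6 * uc p :=
    tsum_congr g_add_swap
  rw [Summable.tsum_add hgs hswap, tsum_mul_left, tsum_uc, h1] at h3
  linarith



noncomputable def bnd (p : ℕ × ℕ) : ℝ := 8 / (((p.2:ℝ) + 1) * ((p.1:ℝ) + p.2 + 1) ^ 2)

lemma sum_Ioc_id (m : ℕ) : ∑ k ∈ Finset.Ioc 0 m, (k:ℝ) = m * (m+1) / 2 := by
  induction m with
  | zero => simp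
  | succ m ih =>
    rw [Finset.sum_Ioc_succ_top (Nat.zero_le _), ih]
    push_cast; ring

lemma Fn_nonneg (n : ℕ) (p : ℕ × ℕ) : 0 ≤ Fn n p := by
  unfold Fn; positivity

lemma L3 (n : ℕ) (p : ℕ × ℕ) : ‖Fn n p‖ ≤ bnd p := by
  rw [Real.norm_of_nonneg (Fn_nonneg n p)]
  obtain ⟨a, b⟩ := p
  have hbnd_nonneg : (0:ℝ) ≤ bnd (a, b) := by unfold bnd; positivity
  by_cases hC : Odd a ∧ Odd b ∧ Nat.Coprime a b
  case neg =>
    have : Fn n (a,b) = 0 := by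
      unfold Fn
      rw [Finset.sum_eq_zero fun k hk => Finset.sum_eq_zero fun l hl => ?_]
      · simp
      · rw [if_neg]; rintro ⟨h1, h2, h3, -⟩; exact hC ⟨h1, h2, h3⟩
    rw [this]; exact hbnd_nonneg
  obtain ⟨hoa, hob, hco⟩ := hC
  have ha1 : 1 ≤ a := hoa.pos
  have hb1 : 1 ≤ b := hob.pos
  by_cases hn : a + b ≤ n
  case neg =>
    have : Fn n (a,b) = 0 := by
      unfold Fn
      rw [Finset.sum_eq_zero fun k hk => Finset.sum_eq_zero fun l hl => ?_]
      · simp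
      · rw [if_neg]
        rintro ⟨-, -, -, h4, -⟩
        simp only [Finset.mem_Ioc] at hk hl
        have h4' : a * k + b * l = n := h4
        have e1 : a ≤ a * k := Nat.le_mul_of_pos_right _ hk.1
        have e2 : b ≤ b * l := Nat.le_mul_of_pos_right _ hl.1
        omega
    rw [this]; exact hbnd_nonneg
  have hn1 : 1 ≤ n := le_trans (by omega) hn
  -- main estimate
  set K : ℕ := n / (a + b) with hK
  have hK1 : 1 ≤ K := (Nat.one_le_div_iff (by omega)).2 hn
  have hKn : (K:ℝ) ≤ (n:ℝ) / (a + b) := by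
    rw [le_div_iff₀ (by positivity)]
    have := Nat.div_mul_le_self n (a+b)
    calc (K:ℝ) * ((a:ℝ) + b) = ((K * (a+b) : ℕ) : ℝ) := by push_cast; ring
      _ ≤ n := by exact_mod_cast this
  -- step A : inner sums
  have stepA : ∀ k ∈ Finset.Ioc 0 n,
      (∑ l ∈ Finset.Ioc 0 n,
        if Odd a ∧ Odd b ∧ Nat.Coprime a b ∧ a * k + b * l = n ∧ k < l
        then ((k * l : ℕ):ℝ) else 0)
      ≤ (if k ≤ K then (k:ℝ) * ((n:ℝ)/b) else 0) := by
    intro k hk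
    simp only [Finset.mem_Ioc] at hk
    by_cases hex : ∃ l ∈ Finset.Ioc 0 n, a * k + b * l = n ∧ k < l
    · obtain ⟨l₀, hl₀mem, hl₀, hkl₀⟩ := hex
      have hsum : (∑ l ∈ Finset.Ioc 0 n,
          if Odd a ∧ Odd b ∧ Nat.Coprime a b ∧ a * k + b * l = n ∧ k < l
          then ((k * l : ℕ):ℝ) else 0) = ((k * l₀ : ℕ) : ℝ) := by
        rw [Finset.sum_eq_single_of_mem l₀ hl₀mem]
        · rw [if_pos ⟨hoa, hob, hco, hl₀, hkl₀⟩]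
        · intro l hl hne
          rw [if_neg]
          rintro ⟨-, -, -, h4, -⟩
          have h6 : a * k + b * l₀ = n := hl₀
          have h7 : b * l = b * l₀ := by omega
          exact hne (Nat.eq_of_mul_eq_mul_left (by omega) h7)
      rw [hsum]
      have hkK : k ≤ K := by
        apply Nat.le_div_iff_mul_le (by omega) |>.2
        have hbk : b * k < b * l₀ := by
          apply mul_lt_mul_of_pos_left hkl₀ (by omega)
        have h5 : a * k + b * k < n := by rw [← hl₀]; exact Nat.add_lt_add_left hbk _
        calc k * (a + b) = a * k + b * k := by ring
          _ ≤ n := le_of_lt h5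
      rw [if_pos hkK]
      push_cast
      have : (l₀ : ℝ) ≤ (n:ℝ)/b := by
        rw [le_div_iff₀ (by positivity)]
        have : b * l₀ ≤ n := by
          have h6 : a * k + b * l₀ = n := hl₀
          omega
        calc (l₀:ℝ) * b = ((b * l₀ : ℕ):ℝ) := by push_cast; ring
          _ ≤ n := by exact_mod_cast this
      have hk0 : (0:ℝ) ≤ (k:ℝ) := Nat.cast_nonneg k
      nlinarith [this]
    · rw [Finset.sum_eq_zero]
      · split <;> positivity
      · intro l hl
        rw [if_neg]
        rintro ⟨-, -, -, h4, h5⟩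
        exact hex ⟨l, hl, h4, h5⟩
  have stepB : (∑ k ∈ Finset.Ioc 0 n, if k ≤ K then (k:ℝ) * ((n:ℝ)/b) else 0)
      ≤ (n:ℝ)/b * ((K:ℝ) * (K+1) / 2) := by
    have : (∑ k ∈ Finset.Ioc 0 n, if k ≤ K then (k:ℝ) * ((n:ℝ)/b) else 0)
        = ∑ k ∈ (Finset.Ioc 0 n).filter (· ≤ K), (k:ℝ) * ((n:ℝ)/b) := by
      rw [Finset.sum_filter]
    rw [this]
    have hsub : (Finset.Ioc 0 n).filter (· ≤ K) ⊆ Finset.Ioc 0 K := by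
      intro k hk
      simp only [Finset.mem_filter, Finset.mem_Ioc] at hk ⊢
      exact ⟨hk.1.1, hk.2⟩
    calc ∑ k ∈ (Finset.Ioc 0 n).filter (· ≤ K), (k:ℝ) * ((n:ℝ)/b)
        ≤ ∑ k ∈ Finset.Ioc 0 K, (k:ℝ) * ((n:ℝ)/b) := by
          apply Finset.sum_le_sum_of_subset_of_nonneg hsub
          intro k _ _; positivity
      _ = (∑ k ∈ Finset.Ioc 0 K, (k:ℝ)) * ((n:ℝ)/b) := by rw [Finset.sum_mul]
      _ = (n:ℝ)/b * ((K:ℝ) * (K+1) / 2) := by rw [sum_Ioc_id]; ring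
  -- combine
  have hnum : ((∑ k ∈ Finset.Ioc 0 n, ∑ l ∈ Finset.Ioc 0 n,
      if Odd a ∧ Odd b ∧ Nat.Coprime a b ∧ a * k + b * l = n ∧ k < l
      then k * l else 0 : ℕ) : ℝ) ≤ (n:ℝ)/b * ((K:ℝ) * (K+1) / 2) := by
    push_cast
    calc (∑ k ∈ Finset.Ioc 0 n, ∑ l ∈ Finset.Ioc 0 n,
        if Odd a ∧ Odd b ∧ Nat.Coprime a b ∧ a * k + b * l = n ∧ k < l
        then ((k:ℝ) * (l:ℝ)) else 0)
        ≤ ∑ k ∈ Finset.Ioc 0 n, (if k ≤ K then (k:ℝ) * ((n:ℝ)/b) else 0) := by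
          apply Finset.sum_le_sum
          intro k hk
          have := stepA k hk
          push_cast at this
          exact this
      _ ≤ (n:ℝ)/b * ((K:ℝ) * (K+1) / 2) := stepB
  unfold Fn bnd
  rw [div_le_iff₀ (by positivity)]
  have hKK : (K:ℝ) + 1 ≤ 2 * ((n:ℝ)/(a+b)) := by
    have h1K : (1:ℝ) ≤ K := by exact_mod_cast hK1
    linarith [hKn]
  have hab : (0:ℝ) < (a:ℝ) + b := by positivity
  have hfinal : (n:ℝ)/b * ((K:ℝ) * (K+1) / 2) ≤ (n:ℝ)^3 / ((b:ℝ) * ((a:ℝ)+b)^2) := by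
    have hnn : (0:ℝ) < n := by exact_mod_cast hn1
    have e1 : (K:ℝ) * ((K:ℝ)+1) ≤ ((n:ℝ)/(a+b)) * (2 * ((n:ℝ)/(a+b))) := by
      apply mul_le_mul hKn hKK (by positivity) (by positivity)
    calc (n:ℝ)/b * ((K:ℝ) * (K+1) / 2)
        ≤ (n:ℝ)/b * (((n:ℝ)/(a+b)) * (2 * ((n:ℝ)/(a+b))) / 2) := by
          apply mul_le_mul_of_nonneg_left _ (by positivity)
          linarith
      _ = (n:ℝ)^3 / ((b:ℝ) * ((a:ℝ)+b)^2) := by field_simp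
    
  calc ((∑ k ∈ Finset.Ioc 0 n, ∑ l ∈ Finset.Ioc 0 n,
      if Odd a ∧ Odd b ∧ Nat.Coprime a b ∧ a * k + b * l = n ∧ k < l
      then k * l else 0 : ℕ) : ℝ)
      ≤ (n:ℝ)^3 / ((b:ℝ) * ((a:ℝ)+b)^2) := le_trans hnum hfinal
    _ ≤ 8 / (((b:ℝ) + 1) * ((a:ℝ) + b + 1) ^ 2) * (n:ℝ)^3 := by
        have hb' : (b:ℝ) + 1 ≤ 2 * b := by
          have : (1:ℝ) ≤ b := by exact_mod_cast hb1
          linarith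
        have hab' : (a:ℝ) + b + 1 ≤ 2 * ((a:ℝ) + b) := by
          have : (1:ℝ) ≤ (a:ℝ) + b := by
            have : (1:ℝ) ≤ a := by exact_mod_cast ha1
            have hbn : (0:ℝ) ≤ b := Nat.cast_nonneg b
            linarith
          linarith
        have hsq : ((a:ℝ) + b + 1)^2 ≤ 4 * ((a:ℝ)+b)^2 := by nlinarith [hab]
        have hkey : ((b:ℝ) + 1) * ((a:ℝ) + b + 1)^2 ≤ 8 * ((b:ℝ) * ((a:ℝ)+b)^2) := by
          nlinarith [hb', hsq, hab, hb1]
        have hbpos : (0:ℝ) < (b:ℝ) * ((a:ℝ)+b)^2 := by positivity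
        have hn3 : (0:ℝ) < (n:ℝ)^3 := by positivity
        rw [div_mul_eq_mul_div, div_le_div_iff₀ hbpos (by positivity)]
        nlinarith [mul_le_mul_of_nonneg_left hkey (le_of_lt hn3)]



noncomputable def uu (m : ℕ) : ℝ := 1 / (((m:ℝ) + 1) * Real.sqrt ((m:ℝ) + 1))

lemma uu_summable : Summable uu := by
  have h : Summable (fun n : ℕ => 1 / (n:ℝ) ^ (3/2 : ℝ)) :=
    (Real.summable_one_div_nat_rpow).2 (by norm_num)
  have h2 := (summable_nat_add_iff 1).2 h
  refine h2.congr fun m => ?_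
  unfold uu
  rw [show ((m + 1 : ℕ):ℝ) = (m:ℝ) + 1 by push_cast; ring]
  rw [show (3/2 : ℝ) = 1 + 1/2 by norm_num, Real.rpow_add (by positivity), Real.rpow_one,
    ← Real.sqrt_eq_rpow]

lemma uu_nonneg (m : ℕ) : 0 ≤ uu m := by unfold uu; positivity

lemma L4 : Summable bnd := by
  have hs : Summable (fun p : ℕ × ℕ => uu p.1 * uu p.2) :=
    uu_summable.mul_of_nonneg uu_summable uu_nonneg uu_nonneg
  refine Summable.of_nonneg_of_le (fun p => by unfold bnd; positivity) (fun p => ?_)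
    (hs.mul_left 8)
  obtain ⟨a, b⟩ := p
  show 8 / (((b:ℝ) + 1) * ((a:ℝ) + b + 1) ^ 2) ≤ 8 * (uu a * uu b)
  unfold uu
  have h1 : (0:ℝ) < (a:ℝ) + 1 := by positivity
  have h2 : (0:ℝ) < (b:ℝ) + 1 := by positivity
  have h3 : (0:ℝ) < (a:ℝ) + b + 1 := by positivity
  have hsa : Real.sqrt ((a:ℝ) + 1) ≤ Real.sqrt ((a:ℝ) + b + 1) := by
    apply Real.sqrt_le_sqrt; push_cast; linarith [Nat.cast_nonneg (α := ℝ) b]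
  have hsb : Real.sqrt ((b:ℝ) + 1) ≤ Real.sqrt ((a:ℝ) + b + 1) := by
    apply Real.sqrt_le_sqrt; push_cast; linarith [Nat.cast_nonneg (α := ℝ) a]
  have hss : Real.sqrt ((a:ℝ) + b + 1) * Real.sqrt ((a:ℝ) + b + 1) = (a:ℝ) + b + 1 :=
    Real.mul_self_sqrt (by positivity)
  have hsa0 : 0 < Real.sqrt ((a:ℝ) + 1) := Real.sqrt_pos.2 h1
  have hsb0 : 0 < Real.sqrt ((b:ℝ) + 1) := Real.sqrt_pos.2 h2
  have e0 : Real.sqrt ((a:ℝ)+1) * Real.sqrt ((b:ℝ)+1) ≤ (a:ℝ) + b + 1 := by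
    calc Real.sqrt ((a:ℝ)+1) * Real.sqrt ((b:ℝ)+1)
        ≤ Real.sqrt ((a:ℝ)+b+1) * Real.sqrt ((a:ℝ)+b+1) :=
          mul_le_mul hsa hsb (Real.sqrt_nonneg _) (Real.sqrt_nonneg _)
      _ = (a:ℝ) + b + 1 := hss
  have key : ((a:ℝ)+1) * Real.sqrt ((a:ℝ)+1) * (((b:ℝ)+1) * Real.sqrt ((b:ℝ)+1))
      ≤ ((b:ℝ)+1) * ((a:ℝ) + b + 1)^2 := by
    have e1 : ((a:ℝ)+1) * (Real.sqrt ((a:ℝ)+1) * Real.sqrt ((b:ℝ)+1))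
        ≤ ((a:ℝ)+b+1) * ((a:ℝ)+b+1) := by
      apply mul_le_mul (by linarith [Nat.cast_nonneg (α := ℝ) b]) e0 (by positivity) (le_of_lt h3)
    nlinarith [e1, h2, h3, mul_le_mul_of_nonneg_left e1 (le_of_lt h2)]
  rw [show (8:ℝ) * (1 / (((a:ℝ) + 1) * Real.sqrt ((a:ℝ) + 1)) *
      (1 / (((b:ℝ) + 1) * Real.sqrt ((b:ℝ) + 1)))) =
      8 / (((a:ℝ)+1) * Real.sqrt ((a:ℝ)+1) * (((b:ℝ)+1) * Real.sqrt ((b:ℝ)+1))) by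
    field_simp]
  exact div_le_div_of_nonneg_left (by norm_num) (by positivity) key



lemma L1 (n : ℕ) :
    ((∑ q ∈ ((Finset.Ioc 0 n ×ˢ Finset.Ioc 0 n) ×ˢ
          (Finset.Ioc 0 n ×ˢ Finset.Ioc 0 n)).filter
        (fun q : (ℕ × ℕ) × ℕ × ℕ =>
          Odd q.1.1 ∧ Odd q.1.2 ∧ Nat.Coprime q.1.1 q.1.2 ∧
            q.1.1 * q.2.1 + q.1.2 * q.2.2 = n ∧ q.2.1 < q.2.2),
        q.2.1 * q.2.2 : ℕ) : ℝ) / (n : ℝ) ^ 3 = ∑' p : ℕ × ℕ, Fn n p := by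
  have h : ∀ p ∉ (Finset.Ioc 0 n ×ˢ Finset.Ioc 0 n), Fn n p = 0 := by
    intro p hp
    have hnum : (∑ k ∈ Finset.Ioc 0 n, ∑ l ∈ Finset.Ioc 0 n,
        if Odd p.1 ∧ Odd p.2 ∧ Nat.Coprime p.1 p.2 ∧ p.1 * k + p.2 * l = n ∧ k < l
        then k * l else 0 : ℕ) = 0 := by
      refine Finset.sum_eq_zero fun k hk => Finset.sum_eq_zero fun l hl => ?_
      rw [if_neg]
      rintro ⟨h1, h2, _, h4, _⟩
      apply hp
      simp only [Finset.mem_product, Finset.mem_Ioc] at hk hl ⊢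
      refine ⟨⟨h1.pos, ?_⟩, ⟨h2.pos, ?_⟩⟩
      · calc p.1 ≤ p.1 * k := Nat.le_mul_of_pos_right _ hk.1
          _ ≤ n := by omega
      · calc p.2 ≤ p.2 * l := Nat.le_mul_of_pos_right _ hl.1
          _ ≤ n := by omega
    unfold Fn
    rw [hnum]
    simp
  rw [tsum_eq_sum h]
  have key : (∑ q ∈ ((Finset.Ioc 0 n ×ˢ Finset.Ioc 0 n) ×ˢ
          (Finset.Ioc 0 n ×ˢ Finset.Ioc 0 n)).filter
        (fun q : (ℕ × ℕ) × ℕ × ℕ =>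
          Odd q.1.1 ∧ Odd q.1.2 ∧ Nat.Coprime q.1.1 q.1.2 ∧
            q.1.1 * q.2.1 + q.1.2 * q.2.2 = n ∧ q.2.1 < q.2.2),
        q.2.1 * q.2.2 : ℕ)
      = ∑ p ∈ (Finset.Ioc 0 n ×ˢ Finset.Ioc 0 n), ∑ k ∈ Finset.Ioc 0 n, ∑ l ∈ Finset.Ioc 0 n,
          if Odd p.1 ∧ Odd p.2 ∧ Nat.Coprime p.1 p.2 ∧ p.1 * k + p.2 * l = n ∧ k < l
          then k * l else 0 := by
    rw [Finset.sum_filter, Finset.sum_product]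
    exact Finset.sum_congr rfl fun p _ => by rw [Finset.sum_product]
  rw [key, Nat.cast_sum, Finset.sum_div]
  rfl

end TwoCyl

open TwoCyl in
theorem two_cylinder_odd_heights_asymptotics :
    Tendsto
      (fun n : ℕ =>
        ((∑ q ∈ ((Finset.Ioc 0 n ×ˢ Finset.Ioc 0 n) ×ˢ
              (Finset.Ioc 0 n ×ˢ Finset.Ioc 0 n)).filter
            (fun q : (ℕ × ℕ) × ℕ × ℕ =>
              Odd q.1.1 ∧ Odd q.1.2 ∧ Nat.Coprime q.1.1 q.1.2 ∧
                q.1.1 * q.2.1 + q.1.2 * q.2.2 = n ∧ q.2.1 < q.2.2),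
            q.2.1 * q.2.2 : ℕ) : ℝ) / (n : ℝ) ^ 3)
      (atTop ⊓ Filter.principal {n : ℕ | n.Prime}) (nhds (1 / 8)) := by
  have h2 : Tendsto (fun n => ∑' p : ℕ × ℕ, Fn n p) atTop (nhds (∑' p : ℕ × ℕ, g p)) :=
    tendsto_tsum_of_dominated_convergence L4 L2 (Eventually.of_forall (fun n => fun p => L3 n p))
  rw [L5] at h2
  have h3 := h2.mono_left (inf_le_left (b := Filter.principal {n : ℕ | n.Prime}))
  refine h3.congr (fun n => ?_)
  exact (L1 n).symm
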